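/- Let γ, α ∈ ℝ and let s, x, y, u, v : (0,∞) → ℝ with s and u differentiable, y and v twice differentiable, and x continuous, satisfying on (0,∞) the three equations (V): v'' + v'/r − v/r² + 2(2y'u + y u' + y u/r) − 4 v u² − γ v s² = 0; (U): v' y − v y' + (2y² + (γ/2) s² + 2v²) u = 0; and (Yα): y'' + y'/r − y/r² − 2(1−α)(2v'u + v u' + v u/r + 2 y u²) − γ (y − x) s² = 0. Then the integrability condition (I) holds on (0,∞): (r u (γ s² + 4α v²))' + 2r (γ x s² + 4α y u²) v = 0. -/

import Mathlib

open Set Filter MeasureTheory Topology Real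

/-- The integrability condition (I): from the field equations (V), (U), (Yα) of the
cylindrically symmetric electroweak vortex ansatz one obtains
`(r u (γ s² + 4α v²))' + 2r (γ x s² + 4α y u²) v = 0` on `(0,∞)`. -/
theorem statement3 (γ α : ℝ)
    (s s' x y y' y'' u u' v v' v'' : ℝ → ℝ)
    (hs : ∀ r ∈ Set.Ioi (0:ℝ), HasDerivAt s (s' r) r)
    (hu : ∀ r ∈ Set.Ioi (0:ℝ), HasDerivAt u (u' r) r)
    (hy : ∀ r ∈ Set.Ioi (0:ℝ), HasDerivAt y (y' r) r)
    (hy' : ∀ r ∈ Set.Ioi (0:ℝ), HasDerivAt y' (y'' r) r)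
    (hv : ∀ r ∈ Set.Ioi (0:ℝ), HasDerivAt v (v' r) r)
    (hv' : ∀ r ∈ Set.Ioi (0:ℝ), HasDerivAt v' (v'' r) r)
    (hx : ContinuousOn x (Set.Ioi (0:ℝ)))
    (hV : ∀ r ∈ Set.Ioi (0:ℝ),
      v'' r + v' r / r - v r / r ^ 2
        + 2 * (2 * y' r * u r + y r * u' r + y r * u r / r)
        - 4 * v r * u r ^ 2 - γ * v r * s r ^ 2 = 0)
    (hU : ∀ r ∈ Set.Ioi (0:ℝ),
      v' r * y r - v r * y' r
        + (2 * y r ^ 2 + γ / 2 * s r ^ 2 + 2 * v r ^ 2) * u r = 0)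
    (hY : ∀ r ∈ Set.Ioi (0:ℝ),
      y'' r + y' r / r - y r / r ^ 2
        - 2 * (1 - α) * (2 * v' r * u r + v r * u' r + v r * u r / r
            + 2 * y r * u r ^ 2)
        - γ * (y r - x r) * s r ^ 2 = 0) :
    ∀ r ∈ Set.Ioi (0:ℝ),
      HasDerivAt (fun t => t * u t * (γ * s t ^ 2 + 4 * α * v t ^ 2))
        (-(2 * r * (γ * x r * s r ^ 2 + 4 * α * y r * u r ^ 2) * v r)) r := by
  intro r hr
  have hr0 : r ≠ 0 := ne_of_gt hr
  -- derivative of the auxiliary function G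
  have hG := (hasDerivAt_id r).mul
    (((((hv' r hr).mul (hy r hr)).sub ((hv r hr).mul (hy' r hr))).const_mul (-2:ℝ) |>.sub
      (((((hy r hr).pow 2).add ((hv r hr).pow 2)).mul (hu r hr)).const_mul (4:ℝ))).add
      ((((hv r hr).pow 2).mul (hu r hr)).const_mul (4*α)))
  -- the target function agrees with G near r, by (U)
  have heq : (fun t => t * u t * (γ * s t ^ 2 + 4 * α * v t ^ 2)) =ᶠ[𝓝 r]
      (fun t => id t *
        ((-2 * (v' t * y t - v t * y' t) - 4 * ((y t ^ 2 + v t ^ 2) * u t))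
          + 4 * α * (v t ^ 2 * u t))) := by
    filter_upwards [isOpen_Ioi.mem_nhds hr] with t ht
    have hUt := hU t ht
    simp only [id]
    linear_combination (2 * t) * hUt
  have hF := hG.congr_of_eventuallyEq heq
  convert hF using 1
  · rfl
  · rfl
  have e1 : v'' r = -(v' r / r) + v r / r ^ 2
      - 2 * (2 * y' r * u r + y r * u' r + y r * u r / r)
      + 4 * v r * u r ^ 2 + γ * v r * s r ^ 2 := by linarith [hV r hr]
  have e2 : y'' r = -(y' r / r) + y r / r ^ 2
      + 2 * (1 - α) * (2 * v' r * u r + v r * u' r + v r * u r / r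
        + 2 * y r * u r ^ 2) + γ * (y r - x r) * s r ^ 2 := by linarith [hY r hr]
  rw [e1, e2]
  simp only [id, Pi.mul_apply, Pi.sub_apply, Pi.add_apply, Pi.pow_apply]
  field_simp
  ring
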